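/- For every k ≥ 2, the integers 22·(10^k − 1), −66·(10^k − 1), −22·(10^k − 1), 66·(10^k − 1) form a 4-cycle of the reflective step map: f(22·(10^k − 1)) = −66·(10^k − 1), f(−66·(10^k − 1)) = −22·(10^k − 1), f(−22·(10^k − 1)) = 66·(10^k − 1), and f(66·(10^k − 1)) = 22·(10^k − 1); in particular f^[4](22·(10^k − 1)) = 22·(10^k − 1). (This family generates the cyclical limits 2178, 21978, 219978, 2199978, … and their triples 6534, 65934, 659934, ….) -/

import Mathlib

/-- Reverse the decimal digits of a natural number. -/
def rev (m : ℕ) : ℕ := Nat.ofDigits 10 (Nat.digits 10 m).reverse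

/-- The reflection of an integer: reverse its digits and flip its sign. -/
def reflect (a : ℤ) : ℤ := if 0 ≤ a then -(rev a.toNat : ℤ) else (rev (-a).toNat : ℤ)

/-- The reflective step map. -/
def f (a : ℤ) : ℤ := a + reflect a

lemma ofrep (n : ℕ) (t : List ℕ) :
    Nat.ofDigits 10 (List.replicate n 9 ++ t) + 1 = 10 ^ n * (Nat.ofDigits 10 t + 1) := by
  induction n with
  | zero => simp
  | succ n ih =>
    rw [List.replicate_succ, List.cons_append, Nat.ofDigits_cons]
    ring_nf
    ring_nf at ih
    omega

lemma digits_form (n a b c d : ℕ) (ha : a < 10) (hb : b < 10) (hc : c < 10) (hd : d < 10)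
    (hd0 : d ≠ 0) :
    Nat.digits 10 (Nat.ofDigits 10 (a :: b :: (List.replicate n 9 ++ [c, d]))) =
      a :: b :: (List.replicate n 9 ++ [c, d]) := by
  apply Nat.digits_ofDigits 10 (by norm_num)
  · intro l hl
    simp only [List.mem_cons, List.mem_append, List.mem_replicate] at hl
    rcases hl with rfl | rfl | ⟨_, rfl⟩ | h
    · exact ha
    · exact hb
    · norm_num
    · simp at h; rcases h with rfl | rfl
      · exact hc
      · exact hd
  · intro h
    have h2 := List.getLast_append_right (l := a :: b :: List.replicate n 9) (l' := [c, d]) (by simp)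
    have h3 : (a :: b :: (List.replicate n 9 ++ [c, d])).getLast h = d := by
      set_option linter.unnecessarySimpa false in simpa using h2
    rw [h3]
    exact hd0

lemma rev_form (n a b c d : ℕ) (ha : a < 10) (hb : b < 10) (hc : c < 10) (hd : d < 10)
    (hd0 : d ≠ 0) :
    rev (Nat.ofDigits 10 (a :: b :: (List.replicate n 9 ++ [c, d]))) =
      Nat.ofDigits 10 (d :: c :: (List.replicate n 9 ++ [b, a])) := by
  rw [rev, digits_form n a b c d ha hb hc hd hd0]
  congr 1
  simp [List.reverse_replicate]

lemma ofdig_val (n a b c d : ℕ) :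
    Nat.ofDigits 10 (a :: b :: (List.replicate n 9 ++ [c, d])) + 100 =
      a + 10 * b + 100 * (10 ^ n * (c + 10 * d + 1)) := by
  have h := ofrep n [c, d]
  rw [Nat.ofDigits_cons, Nat.ofDigits_cons]
  simp [Nat.ofDigits] at h ⊢
  omega

theorem cycle_family_22 (k : ℕ) (hk : 2 ≤ k) :
    f (22 * (10 ^ k - 1)) = -(66 * (10 ^ k - 1)) ∧
    f (-(66 * (10 ^ k - 1))) = -(22 * (10 ^ k - 1)) ∧
    f (-(22 * (10 ^ k - 1))) = 66 * (10 ^ k - 1) ∧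
    f (66 * (10 ^ k - 1)) = 22 * (10 ^ k - 1) ∧
    f^[4] (22 * (10 ^ k - 1)) = 22 * (10 ^ k - 1) := by
  set n := k - 2 with hn
  have hk2 : k = n + 2 := by omega
  have hp : (1 : ℕ) ≤ 10 ^ n := Nat.one_le_pow _ _ (by norm_num)
  -- the two natural numbers and their reverses
  have hN1 : Nat.ofDigits 10 (8 :: 7 :: (List.replicate n 9 ++ [1, 2])) =
      22 * (10 ^ k - 1) := by
    have := ofdig_val n 8 7 1 2
    rw [hk2, pow_add]
    omega
  have hN2 : Nat.ofDigits 10 (4 :: 3 :: (List.replicate n 9 ++ [5, 6])) =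
      66 * (10 ^ k - 1) := by
    have := ofdig_val n 4 3 5 6
    rw [hk2, pow_add]
    omega
  have hR1 : rev (22 * (10 ^ k - 1)) = 88 * (10 ^ k - 1) := by
    rw [← hN1, rev_form n 8 7 1 2 (by norm_num) (by norm_num) (by norm_num) (by norm_num)
      (by norm_num)]
    have := ofdig_val n 2 1 7 8
    rw [hk2, pow_add]
    omega
  have hR2 : rev (66 * (10 ^ k - 1)) = 44 * (10 ^ k - 1) := by
    rw [← hN2, rev_form n 4 3 5 6 (by norm_num) (by norm_num) (by norm_num) (by norm_num)
      (by norm_num)]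
    have := ofdig_val n 6 5 3 4
    rw [hk2, pow_add]
    omega
  -- integer-level facts
  have hpz : (1 : ℤ) ≤ 10 ^ k := one_le_pow₀ (by norm_num)
  have hpk : (1 : ℕ) ≤ 10 ^ k := Nat.one_le_pow _ _ (by norm_num)
  have hc22 : ((22 * (10 ^ k - 1) : ℕ) : ℤ) = 22 * (10 ^ k - 1) := by push_cast [hpk]; ring
  have hc66 : ((66 * (10 ^ k - 1) : ℕ) : ℤ) = 66 * (10 ^ k - 1) := by push_cast [hpk]; ring
  have hc44 : ((44 * (10 ^ k - 1) : ℕ) : ℤ) = 44 * (10 ^ k - 1) := by push_cast [hpk]; ring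
  have hc88 : ((88 * (10 ^ k - 1) : ℕ) : ℤ) = 88 * (10 ^ k - 1) := by push_cast [hpk]; ring
  have h1pos : (0 : ℤ) ≤ 22 * (10 ^ k - 1) := by nlinarith
  have h2pos : (0 : ℤ) ≤ 66 * (10 ^ k - 1) := by nlinarith
  have ht1 : (22 * (10 ^ k - 1) : ℤ).toNat = 22 * (10 ^ k - 1) := by
    rw [← hc22, Int.toNat_natCast]
  have ht2 : (66 * (10 ^ k - 1) : ℤ).toNat = 66 * (10 ^ k - 1) := by
    rw [← hc66, Int.toNat_natCast]
  have e1 : f (22 * (10 ^ k - 1)) = -(66 * (10 ^ k - 1)) := by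
    rw [f, reflect, if_pos h1pos, ht1, hR1, hc88]; ring
  have e2 : f (-(66 * (10 ^ k - 1))) = -(22 * (10 ^ k - 1)) := by
    by_cases h : (0 : ℤ) ≤ -(66 * (10 ^ k - 1))
    · have : (66 : ℤ) * (10 ^ k - 1) = 0 := le_antisymm (by linarith) h2pos
      rw [f, reflect, if_pos h, this]
      simp [rev]
      linarith
    · rw [f, reflect, if_neg h, neg_neg, ht2, hR2, hc44]; ring
  have e3 : f (-(22 * (10 ^ k - 1))) = 66 * (10 ^ k - 1) := by
    by_cases h : (0 : ℤ) ≤ -(22 * (10 ^ k - 1))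
    · have : (22 : ℤ) * (10 ^ k - 1) = 0 := le_antisymm (by linarith) h1pos
      rw [f, reflect, if_pos h, this]
      simp [rev]
      nlinarith
    · rw [f, reflect, if_neg h, neg_neg, ht1, hR1, hc88]; ring
  have e4 : f (66 * (10 ^ k - 1)) = 22 * (10 ^ k - 1) := by
    rw [f, reflect, if_pos h2pos, ht2, hR2, hc44]; ring
  refine ⟨e1, e2, e3, e4, ?_⟩
  show f (f (f (f _))) = _
  rw [e1, e2, e3, e4]
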